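/- Let m ≥ 1 and let Q ∈ ℂ[t_1, …, t_m] be a polynomial such that the linear polynomial 1 + t_1 + ⋯ + t_m divides Q(t_1², …, t_m²) in ℂ[t_1, …, t_m]. Then for every sign vector ε ∈ {−1,1}^m the polynomial 1 + ε_1 t_1 + ⋯ + ε_m t_m divides Q(t_1², …, t_m²), and consequently the full product P(t) = ∏_{ε ∈ {−1,1}^m} (1 + ε_1 t_1 + ⋯ + ε_m t_m) divides Q(t_1², …, t_m²) in ℂ[t_1, …, t_m]. -/

import Mathlib

open MvPolynomial

/-- The sign `±1 ∈ ℂ` attached to a boolean. -/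
noncomputable def signVal (b : Bool) : ℂ := if b then 1 else -1

theorem my_prod_dvd {α ι : Type*} [CommMonoidWithZero α] [IsCancelMulZero α] [DecidableEq ι]
    (s : Finset ι) (f : ι → α)
    (hp : ∀ i ∈ s, Prime (f i))
    (hpa : ∀ i ∈ s, ∀ j ∈ s, i ≠ j → ¬ Associated (f i) (f j)) :
    ∀ n : α, (∀ i ∈ s, f i ∣ n) → (∏ i ∈ s, f i) ∣ n := by
  induction s using Finset.induction_on with
  | empty => simp
  | @insert a s ha ih =>
    intro n hd
    obtain ⟨k, rfl⟩ := hd a (Finset.mem_insert_self a s)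
    rw [Finset.prod_insert ha]
    refine mul_dvd_mul_left _ (ih (fun i hi => hp i (Finset.mem_insert_of_mem hi))
      (fun i hi j hj hij => hpa i (Finset.mem_insert_of_mem hi) j (Finset.mem_insert_of_mem hj) hij)
      k (fun i hi => ?_))
    have hdvd := hd i (Finset.mem_insert_of_mem hi)
    have hpi := hp i (Finset.mem_insert_of_mem hi)
    rcases hpi.dvd_or_dvd hdvd with h | h
    · exact absurd (hpi.associated_of_dvd (hp a (Finset.mem_insert_self a s)) h)
        (fun hass => hpa i (Finset.mem_insert_of_mem hi) a (Finset.mem_insert_self a s)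
          (fun he => ha (he ▸ hi)) hass)
    · exact h

theorem prime_linear (n : ℕ) (ε : Fin (n+1) → ℂ) (hε : ∀ i, ε i * ε i = 1) :
    Prime (1 + ∑ i, C (ε i) * X i : MvPolynomial (Fin (n+1)) ℂ) := by
  refine (MulEquiv.prime_iff (finSuccEquiv ℂ n).toRingEquiv.toMulEquiv).mp ?_
  show Prime ((finSuccEquiv ℂ n) (1 + ∑ i, C (ε i) * X i))
  have hC : ∀ r : ℂ, finSuccEquiv ℂ n (C r) = Polynomial.C (C r) := fun r => by
    simp [finSuccEquiv_apply]
  set b : MvPolynomial (Fin n) ℂ := 1 + ∑ i, C (ε i.succ) * X i with hb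
  have himg : (finSuccEquiv ℂ n) (1 + ∑ i, C (ε i) * X i) =
      Polynomial.C (C (ε 0)) * (Polynomial.X - Polynomial.C (C (-ε 0) * b)) := by
    have h0 := hε 0
    rw [mul_sub, ← Polynomial.C_mul, ← mul_assoc, ← C_mul, mul_neg, h0]
    simp only [map_add, map_one, map_sum, map_mul, finSuccEquiv_X_zero, Fin.sum_univ_succ,
      finSuccEquiv_X_succ, hC, hb]
    simp only [map_add, map_one, map_sum, map_mul, Polynomial.C_neg, map_neg]
    ring
  rw [himg]
  have hu : IsUnit (Polynomial.C (C (ε 0)) : Polynomial (MvPolynomial (Fin n) ℂ)) := by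
    have h1 : IsUnit (ε 0) := IsUnit.of_mul_eq_one _ (hε 0)
    exact (h1.map MvPolynomial.C).map Polynomial.C
  exact Associated.prime ⟨hu.unit, by rw [mul_comm, IsUnit.unit_spec]⟩
    (Polynomial.prime_X_sub_C _)

theorem sign_div (m : ℕ) (Q : MvPolynomial (Fin m) ℂ)
    (hQ : (1 + ∑ i, X i) ∣ aeval (fun i : Fin m => (X i : MvPolynomial (Fin m) ℂ) ^ 2) Q)
    (ε : Fin m → ℂ) (hε : ∀ i, ε i * ε i = 1) :
    (1 + ∑ i, C (ε i) * X i) ∣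
      aeval (fun i : Fin m => (X i : MvPolynomial (Fin m) ℂ) ^ 2) Q := by
  have h := map_dvd (aeval (fun i : Fin m => C (ε i) * X i :
      Fin m → MvPolynomial (Fin m) ℂ)) hQ
  have h1 : aeval (fun i : Fin m => C (ε i) * X i : Fin m → MvPolynomial (Fin m) ℂ)
      ((1 + ∑ i, X i : MvPolynomial (Fin m) ℂ)) = 1 + ∑ i, C (ε i) * X i := by
    simp [map_sum]
  have h2 : aeval (fun i : Fin m => C (ε i) * X i : Fin m → MvPolynomial (Fin m) ℂ)
      (aeval (fun i : Fin m => (X i : MvPolynomial (Fin m) ℂ) ^ 2) Q) =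
      aeval (fun i : Fin m => (X i : MvPolynomial (Fin m) ℂ) ^ 2) Q := by
    show aeval _ (bind₁ (fun i : Fin m => (X i : MvPolynomial (Fin m) ℂ) ^ 2) Q) = _
    rw [aeval_bind₁]
    have he : (fun i : Fin m => aeval (fun i : Fin m => C (ε i) * X i :
        Fin m → MvPolynomial (Fin m) ℂ) ((X i : MvPolynomial (Fin m) ℂ) ^ 2)) =
        fun i : Fin m => (X i : MvPolynomial (Fin m) ℂ) ^ 2 := by
      funext i
      simp only [pow_two, map_mul, aeval_X]
      rw [mul_mul_mul_comm, ← C_mul, hε i, C_1, one_mul]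
    rw [he]
  rwa [h1, h2] at h

theorem non_assoc (m : ℕ) (ε ε' : Fin m → ℂ)
    (hε : ∀ i, ε i = 1 ∨ ε i = -1) (hε' : ∀ i, ε' i = 1 ∨ ε' i = -1)
    (j : Fin m) (hj : ε j ≠ ε' j) :
    ¬ Associated (1 + ∑ i, C (ε i) * X i : MvPolynomial (Fin m) ℂ)
      (1 + ∑ i, C (ε' i) * X i) := by
  rintro ⟨u, hu⟩
  -- evaluate at x = (i = j → -ε' j, else 0)
  classical
  set x : Fin m → ℂ := fun i => if i = j then -ε' j else 0 with hx
  have hP' : eval x (1 + ∑ i, C (ε' i) * X i) = 0 := by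
    simp [hx, map_sum, Finset.sum_ite_eq', mul_ite]
    rcases hε' j with h | h <;> rw [h] <;> ring
  have hP : eval x (1 + ∑ i, C (ε i) * X i) = 1 - ε j * ε' j := by
    simp [hx, map_sum, Finset.sum_ite_eq', mul_ite]
    ring
  have hmul : ε j * ε' j = -1 := by
    rcases hε j with h | h <;> rcases hε' j with h' | h' <;> rw [h, h'] at hj ⊢ <;>
      first
        | exact absurd rfl hj
        | norm_num
  have hne : (1 : ℂ) - ε j * ε' j ≠ 0 := by rw [hmul]; norm_num
  have := congrArg (eval x) hu
  rw [map_mul, hP, hP'] at this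
  have hun : eval x (u : MvPolynomial (Fin m) ℂ) ≠ 0 := by
    have : IsUnit (eval x (u : MvPolynomial (Fin m) ℂ)) := (u.isUnit).map (eval x)
    exact this.ne_zero
  rcases mul_eq_zero.mp this with h | h
  · exact hne h
  · exact hun h

/-- if `1 + t_1 + ⋯ + t_m` divides `Q(t_1^2, …, t_m^2)`, then so
does `1 + ε_1 t_1 + ⋯ + ε_m t_m` for every sign vector `ε ∈ {-1,1}^m`, and hence
the full product `P(t) = ∏_ε (1 + ε_1 t_1 + ⋯ + ε_m t_m)` divides
`Q(t_1^2, …, t_m^2)`. -/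
theorem lauricella_sign_factors_divide (m : ℕ) (hm : 1 ≤ m)
    (Q : MvPolynomial (Fin m) ℂ)
    (hQ : (1 + ∑ i, X i) ∣
      aeval (fun i : Fin m => (X i : MvPolynomial (Fin m) ℂ) ^ 2) Q) :
    (∀ ε : Fin m → ℂ, (∀ i, ε i = 1 ∨ ε i = -1) →
      (1 + ∑ i, C (ε i) * X i) ∣
        aeval (fun i : Fin m => (X i : MvPolynomial (Fin m) ℂ) ^ 2) Q) ∧
    (∏ ε : Fin m → Bool, (1 + ∑ i, C (signVal (ε i)) * X i)) ∣
      aeval (fun i : Fin m => (X i : MvPolynomial (Fin m) ℂ) ^ 2) Q := by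
  have hsv : ∀ b : Bool, signVal b = 1 ∨ signVal b = -1 := by
    intro b; cases b <;> simp [signVal]
  have hsq : ∀ (ε : Fin m → ℂ), (∀ i, ε i = 1 ∨ ε i = -1) → ∀ i, ε i * ε i = 1 := by
    intro ε hε i; rcases hε i with h | h <;> rw [h] <;> norm_num
  have part1 : ∀ ε : Fin m → ℂ, (∀ i, ε i = 1 ∨ ε i = -1) →
      (1 + ∑ i, C (ε i) * X i) ∣
        aeval (fun i : Fin m => (X i : MvPolynomial (Fin m) ℂ) ^ 2) Q :=
    fun ε hε => sign_div m Q hQ ε (hsq ε hε)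
  refine ⟨part1, ?_⟩
  obtain ⟨n, rfl⟩ : ∃ n, m = n + 1 := ⟨m - 1, (Nat.succ_pred_eq_of_pos hm).symm⟩
  refine my_prod_dvd Finset.univ
    (fun ε : Fin (n+1) → Bool => 1 + ∑ i, C (signVal (ε i)) * X i)
    (fun ε _ => prime_linear n _ (hsq _ (fun i => hsv (ε i))))
    (fun ε _ ε' _ hne => ?_) _
    (fun ε _ => part1 _ (fun i => hsv (ε i)))
  obtain ⟨j, hj⟩ := Function.ne_iff.mp hne
  refine non_assoc (n+1) _ _ (fun i => hsv (ε i)) (fun i => hsv (ε' i)) j ?_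
  rcases Bool.eq_false_or_eq_true (ε j) with h | h <;>
    rcases Bool.eq_false_or_eq_true (ε' j) with h' | h' <;>
      rw [h, h'] at hj ⊢ <;> simp [signVal] at hj ⊢ <;> norm_num
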